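/- Let W = I₈ + λ⁻¹W₁ + λ⁻²W₂ with W₁ = [[0, u, 0], [-v^♯, 0, -u^♯], [0, v, 0]] and W₂ = [[0, 0, ǧ], [0, 0, 0], [0, 0, 0]] in 2+4+2 block form, W₀ = [[a, 0, b], [0, q, 0], [c, 0, d]] block-diagonal-plus-corners with q invertible, and suppose the Laurent coefficient equation W₁W₀ + W₂W₀J̌₈W̄₁ᵗǰ₈ = H₁ + J̌₈H̄₁ᵗǰ₈H₂ holds, where H₁ = [[0, f, 0], [0, 0, -f^♯], [0, 0, 0]], H₂ = [[0, 0, g], [0, 0, 0], [0, 0, 0]]. Then comparing the middle-row/middle-column blocks forces v·q = 0, hence v = 0. -/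

import Mathlib

open Matrix

abbrev Idx8 := Fin 2 ⊕ (Fin 4 ⊕ Fin 2)

/-- Assemble an 8×8 matrix from nine blocks in the 2+4+2 partition. -/
def blk (A11 : Matrix (Fin 2) (Fin 2) ℂ) (A12 : Matrix (Fin 2) (Fin 4) ℂ)
    (A13 : Matrix (Fin 2) (Fin 2) ℂ)
    (A21 : Matrix (Fin 4) (Fin 2) ℂ) (A22 : Matrix (Fin 4) (Fin 4) ℂ)
    (A23 : Matrix (Fin 4) (Fin 2) ℂ)
    (A31 : Matrix (Fin 2) (Fin 2) ℂ) (A32 : Matrix (Fin 2) (Fin 4) ℂ)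
    (A33 : Matrix (Fin 2) (Fin 2) ℂ) : Matrix Idx8 Idx8 ℂ :=
  Matrix.of fun i j =>
    match i, j with
    | .inl i, .inl j => A11 i j
    | .inl i, .inr (.inl j) => A12 i j
    | .inl i, .inr (.inr j) => A13 i j
    | .inr (.inl i), .inl j => A21 i j
    | .inr (.inl i), .inr (.inl j) => A22 i j
    | .inr (.inl i), .inr (.inr j) => A23 i j
    | .inr (.inr i), .inl j => A31 i j
    | .inr (.inr i), .inr (.inl j) => A32 i j
    | .inr (.inr i), .inr (.inr j) => A33 i j

/-- The `n×n` anti-diagonal matrix of ones. -/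
def Jmat (n : ℕ) : Matrix (Fin n) (Fin n) ℂ :=
  Matrix.of fun i j => if (i : ℕ) + (j : ℕ) = n - 1 then 1 else 0

/-- `x^♯ = J₄ xᵀ J₂`. -/
noncomputable def sharp (x : Matrix (Fin 2) (Fin 4) ℂ) : Matrix (Fin 4) (Fin 2) ℂ :=
  Jmat 4 * xᵀ * Jmat 2

/-- Entrywise complex conjugate. -/
noncomputable def mconj {m n : Type*} (A : Matrix m n ℂ) : Matrix m n ℂ :=
  A.map (starRingEnd ℂ)

/-- Comparing the `(3,2)` block of the Laurent coefficient equation forces `v q = 0`,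
hence `v = 0` since `q` is invertible. -/
theorem v_eq_zero_of_coeff_eq
    (u v : Matrix (Fin 2) (Fin 4) ℂ) (gC : Matrix (Fin 2) (Fin 2) ℂ)
    (a b c d : Matrix (Fin 2) (Fin 2) ℂ) (q : Matrix (Fin 4) (Fin 4) ℂ)
    (hq : IsUnit q)
    (f : Matrix (Fin 2) (Fin 4) ℂ) (g : Matrix (Fin 2) (Fin 2) ℂ)
    (J8c : Matrix Idx8 Idx8 ℂ) (hJ : J8cᵀ = J8c)
    (heq : blk 0 u 0 (-(sharp v)) 0 (-(sharp u)) 0 v 0 * blk a 0 b 0 q 0 c 0 d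
      + blk 0 0 gC 0 0 0 0 0 0 * blk a 0 b 0 q 0 c 0 d * J8c
          * (mconj (blk 0 u 0 (-(sharp v)) 0 (-(sharp u)) 0 v 0))ᵀ * J8c
      = blk 0 f 0 0 0 (-(sharp f)) 0 0 0
        + J8c * (mconj (blk 0 f 0 0 0 (-(sharp f)) 0 0 0))ᵀ * J8c
            * blk 0 0 g 0 0 0 0 0 0) :
    v * q = 0 ∧ v = 0 := by
  have h1 : v * q = 0 := by
    ext i j
    have h := congrFun (congrFun heq (Sum.inr (Sum.inr i))) (Sum.inr (Sum.inl j))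
    simp only [Matrix.add_apply, Matrix.mul_apply, Fintype.sum_sum_type,
      Matrix.transpose_apply, blk, mconj, Matrix.of_apply, Matrix.map_apply,
      Matrix.zero_apply, zero_mul, mul_zero, Finset.sum_const_zero, add_zero,
      zero_add, map_zero] at h
    simpa [Matrix.mul_apply, Matrix.zero_apply] using h
  refine ⟨h1, ?_⟩
  obtain ⟨Q, hQ⟩ := hq
  calc v = v * q * (↑Q⁻¹ : Matrix (Fin 4) (Fin 4) ℂ) := by
        rw [Matrix.mul_assoc, ← hQ, Units.mul_inv, Matrix.mul_one]
    _ = 0 := by rw [h1, Matrix.zero_mul]
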